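/- Let $S$ be a numerical semigroup of genus $g$ with multiplicity $m = g - k_1$ where $g \geq 3k_1 + 2$ and $k_1 \geq -1$, and Kunz coordinate vector $(x_1,\dots,x_{m-1})$. Then the embedding dimension satisfies $e(S) = g - 2k_1 - 1 + a + b - c$, where, setting $\overline{x} = (x_1,\dots,x_{2k_1+1})$: $a = \#\{i \leq 2k_1+1 : x_i = 2\}$, $b = \#\{i \leq 2k_1+1 : x_i = 3\}$, and $c = \#\{i \leq 2k_1+1 : \exists j_1, j_2 \leq 2k_1+1, j_1 + j_2 = i, (x_{j_1}, x_{j_2}, x_i) = (1,1,2)\}$. -/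

import Mathlib

section NS
variable {S : Set ℕ} {m : ℕ} {x : ℕ → ℕ}



/-- multiples of m in S -/
lemma ns_mul (hadd : ∀ a ∈ S, ∀ b ∈ S, a + b ∈ S) (h0 : 0 ∈ S) (hmS : m ∈ S) :
    ∀ p : ℕ, p * m ∈ S := by
  intro p
  induction p with
  | zero => simpa using h0
  | succ n ih => have := hadd _ ih _ hmS; simpa [Nat.succ_mul] using this

/-- membership in class r -/
lemma ns_mem_iff (hadd : ∀ a ∈ S, ∀ b ∈ S, a + b ∈ S) (h0 : 0 ∈ S) (hmS : m ∈ S)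
    (hx : ∀ i, 1 ≤ i → i ≤ m - 1 → x i * m + i ∈ S ∧ (x i - 1) * m + i ∉ S)
    {r : ℕ} (h1 : 1 ≤ r) (h2 : r < m) : ∀ q : ℕ, (q * m + r ∈ S ↔ x r ≤ q) := by
  have hr : r ≤ m - 1 := Nat.le_sub_one_of_lt h2
  obtain ⟨hin, hout⟩ := hx r h1 hr
  intro q
  constructor
  · intro hq
    by_contra hlt
    push_neg at hlt
    have hq1 : q ≤ x r - 1 := Nat.le_sub_one_of_lt hlt
    have : (x r - 1) * m + r = (q * m + r) + (x r - 1 - q) * m := by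
      have : (x r - 1 - q) + q = x r - 1 := Nat.sub_add_cancel hq1
      nlinarith [Nat.sub_add_cancel hq1, Nat.mul_le_mul_right m hq1]
    exact hout (this ▸ hadd _ hq _ (ns_mul hadd h0 hmS _))
  · intro hq
    have : q * m + r = (x r * m + r) + (q - x r) * m := by
      have h := Nat.sub_add_cancel hq
      nlinarith [Nat.sub_add_cancel hq]
    exact this ▸ hadd _ hin _ (ns_mul hadd h0 hmS _)

lemma ns_xpos (hadd : ∀ a ∈ S, ∀ b ∈ S, a + b ∈ S) (h0 : 0 ∈ S) (hmS : m ∈ S)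
    (hx : ∀ i, 1 ≤ i → i ≤ m - 1 → x i * m + i ∈ S ∧ (x i - 1) * m + i ∉ S)
    {r : ℕ} (h1 : 1 ≤ r) (h2 : r < m) : 1 ≤ x r := by
  obtain ⟨hin, hout⟩ := hx r h1 (Nat.le_sub_one_of_lt h2)
  by_contra h
  push_neg at h
  interval_cases hxr : x r
  simp at hin hout
  exact hout hin

/-- Kunz inequality, no wrap -/
lemma kunz1 (hadd : ∀ a ∈ S, ∀ b ∈ S, a + b ∈ S) (h0 : 0 ∈ S) (hmS : m ∈ S)
    (hx : ∀ i, 1 ≤ i → i ≤ m - 1 → x i * m + i ∈ S ∧ (x i - 1) * m + i ∉ S)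
    {j k : ℕ} (hj1 : 1 ≤ j) (hk1 : 1 ≤ k) (hjk : j + k < m) :
    x (j + k) ≤ x j + x k := by
  have hj2 : j < m := by omega
  have hk2 : k < m := by omega
  have h1 := (ns_mem_iff hadd h0 hmS hx hj1 hj2 (x j)).2 le_rfl
  have h2 := (ns_mem_iff hadd h0 hmS hx hk1 hk2 (x k)).2 le_rfl
  have h3 := hadd _ h1 _ h2
  have : (x j + x k) * m + (j + k) ∈ S := by
    have e : (x j * m + j) + (x k * m + k) = (x j + x k) * m + (j + k) := by ring
    rwa [e] at h3
  exact (ns_mem_iff hadd h0 hmS hx (by omega) hjk _).1 this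

/-- Kunz inequality, wrap -/
lemma kunz2 (hadd : ∀ a ∈ S, ∀ b ∈ S, a + b ∈ S) (h0 : 0 ∈ S) (hmS : m ∈ S)
    (hx : ∀ i, 1 ≤ i → i ≤ m - 1 → x i * m + i ∈ S ∧ (x i - 1) * m + i ∉ S)
    {j k i : ℕ} (hj1 : 1 ≤ j) (hj2 : j < m) (hk1 : 1 ≤ k) (hk2 : k < m)
    (hi1 : 1 ≤ i) (hi2 : i < m) (hjk : j + k = m + i) :
    x i ≤ x j + x k + 1 := by
  have h1 := (ns_mem_iff hadd h0 hmS hx hj1 hj2 (x j)).2 le_rfl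
  have h2 := (ns_mem_iff hadd h0 hmS hx hk1 hk2 (x k)).2 le_rfl
  have h3 := hadd _ h1 _ h2
  have : (x j + x k + 1) * m + i ∈ S := by
    have e : (x j * m + j) + (x k * m + k) = (x j + x k + 1) * m + i := by
      rw [add_mul, add_mul, one_mul]; omega
    rwa [e] at h3
  exact (ns_mem_iff hadd h0 hmS hx hi1 hi2 _).1 this



/-- the complement as a finset -/
lemma ns_compl_eq (hmul : ∀ p : ℕ, p * m ∈ S)
    (hmem : ∀ r, 1 ≤ r → r < m → ∀ q : ℕ, (q * m + r ∈ S ↔ x r ≤ q))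
    (hm1 : 1 ≤ m) :
    Sᶜ = ↑((Finset.Ico 1 m).biUnion (fun r => (Finset.range (x r)).image (fun q => q * m + r))) := by
  ext n
  simp only [Set.mem_compl_iff, Finset.coe_biUnion, Set.mem_iUnion, Finset.mem_coe,
    Finset.mem_Ico, Finset.mem_image, Finset.mem_range]
  have hdm : n / m * m + n % m = n := by
    have := Nat.div_add_mod' n m; omega
  have hmod : n % m < m := Nat.mod_lt _ (by omega)
  constructor
  · intro hn
    have hr1 : 1 ≤ n % m := by
      rcases Nat.eq_zero_or_pos (n % m) with h | h
      · exact absurd (hdm ▸ (h ▸ hmul (n / m) : n / m * m + n % m ∈ S)) hn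
      · exact h
    refine ⟨n % m, ⟨hr1, hmod⟩, n / m, ?_, hdm⟩
    by_contra hle
    push_neg at hle
    exact hn (hdm ▸ (hmem (n % m) hr1 hmod (n / m)).2 hle)
  · rintro ⟨r, ⟨hr1, hr2⟩, q, hq, rfl⟩ hmem2
    have := (hmem r hr1 hr2 q).1 hmem2
    omega

lemma ns_genus (hmul : ∀ p : ℕ, p * m ∈ S)
    (hmem : ∀ r, 1 ≤ r → r < m → ∀ q : ℕ, (q * m + r ∈ S ↔ x r ≤ q))
    (hm1 : 1 ≤ m) :
    Sᶜ.ncard = ∑ i ∈ Finset.Ico 1 m, x i := by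
  rw [ns_compl_eq hmul hmem hm1, Set.ncard_coe_finset]
  rw [Finset.card_biUnion]
  · refine Finset.sum_congr rfl fun r hr => ?_
    rw [Finset.card_image_of_injective _ (fun a b hab => by
      have : a * m = b * m := by omega
      exact Nat.eq_of_mul_eq_mul_right (by omega) this)]
    exact Finset.card_range _
  · intro r hr s hs hrs
    simp only [Finset.mem_coe, Finset.mem_Ico] at hr hs
    rw [Function.onFun, Finset.disjoint_left]
    rintro a ha hb
    simp only [Finset.mem_image, Finset.mem_range] at ha hb
    obtain ⟨q, _, rfl⟩ := ha
    obtain ⟨q', _, he⟩ := hb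
    apply hrs
    have h1 : (q * m + r) % m = r := by
      simp [Nat.add_mod, Nat.mul_mod_left, Nat.mod_eq_of_lt hr.2]
    have h2 : (q' * m + s) % m = s := by
      simp [Nat.add_mod, Nat.mul_mod_left, Nat.mod_eq_of_lt hs.2]
    rw [← h1, ← he, h2]

/-- reflection sum bound -/
lemma unused_refl_sum (w : ℕ → ℕ) (a b c : ℕ)
    (h : ∀ j, a ≤ j → j < b → c ≤ w j + w (a + b - 1 - j)) :
    c * (b - a) ≤ 2 * ∑ j ∈ Finset.Ico a b, w j := by
  have hrefl : ∑ j ∈ Finset.Ico a b, w (a + b - 1 - j) = ∑ j ∈ Finset.Ico a b, w j := by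
    refine Finset.sum_nbij' (fun j => a + b - 1 - j) (fun j => a + b - 1 - j) ?_ ?_ ?_ ?_ ?_ <;>
      intro j hj <;> simp only [Finset.mem_Ico] at hj ⊢ <;> try omega
  calc c * (b - a) = ∑ _j ∈ Finset.Ico a b, c := by
        rw [Finset.sum_const, Nat.card_Ico, smul_eq_mul, mul_comm]
    _ ≤ ∑ j ∈ Finset.Ico a b, (w j + w (a + b - 1 - j)) := by
        apply Finset.sum_le_sum; intro j hj
        simp only [Finset.mem_Ico] at hj; exact h j hj.1 hj.2
    _ = 2 * ∑ j ∈ Finset.Ico a b, w j := by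
        rw [Finset.sum_add_distrib, hrefl]; ring



lemma refl_sum (w : ℕ → ℕ) (a b c : ℕ)
    (h : ∀ j, a ≤ j → j < b → c ≤ w j + w (a + b - 1 - j)) :
    c * (b - a) ≤ 2 * ∑ j ∈ Finset.Ico a b, w j := by
  have hrefl : ∑ j ∈ Finset.Ico a b, w (a + b - 1 - j) = ∑ j ∈ Finset.Ico a b, w j := by
    refine Finset.sum_nbij' (fun j => a + b - 1 - j) (fun j => a + b - 1 - j) ?_ ?_ ?_ ?_ ?_ <;>
      intro j hj <;> simp only [Finset.mem_Ico] at hj ⊢ <;> try omega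
  calc c * (b - a) = ∑ _j ∈ Finset.Ico a b, c := by
        rw [Finset.sum_const, Nat.card_Ico, smul_eq_mul, mul_comm]
    _ ≤ ∑ j ∈ Finset.Ico a b, (w j + w (a + b - 1 - j)) := by
        apply Finset.sum_le_sum; intro j hj
        simp only [Finset.mem_Ico] at hj; exact h j hj.1 hj.2
    _ = 2 * ∑ j ∈ Finset.Ico a b, w j := by
        rw [Finset.sum_add_distrib, hrefl]; ring

lemma kcount {i : ℕ} (hi1 : 1 ≤ i) (hi2 : i < m) (c1 c2 : ℕ)
    (h1 : ∀ j, 1 ≤ j → j < i → c1 ≤ (x j - 1) + (x (i - j) - 1))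
    (h2 : ∀ j, i < j → j < m → c2 ≤ (x j - 1) + (x (m + i - j) - 1)) :
    c1 * (i - 1) + 2 * (x i - 1) + c2 * (m - 1 - i) ≤
      2 * ∑ j ∈ Finset.Ico 1 m, (x j - 1) := by
  have e1 : ∑ j ∈ Finset.Ico 1 i, (x j - 1) + ∑ j ∈ Finset.Ico i m, (x j - 1)
      = ∑ j ∈ Finset.Ico 1 m, (x j - 1) :=
    Finset.sum_Ico_consecutive _ hi1 (le_of_lt hi2)
  have e2 : ∑ j ∈ Finset.Ico i m, (x j - 1) = (x i - 1) + ∑ j ∈ Finset.Ico (i+1) m, (x j - 1) :=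
    Finset.sum_eq_sum_Ico_succ_bot hi2 _
  have r1 : c1 * (i - 1) ≤ 2 * ∑ j ∈ Finset.Ico 1 i, (x j - 1) := by
    have := refl_sum (fun j => x j - 1) 1 i c1 (fun j hj1 hj2 => by
      have e : 1 + i - 1 - j = i - j := by omega
      rw [e]; exact h1 j hj1 hj2)
    simpa using this
  have r2 : c2 * (m - 1 - i) ≤ 2 * ∑ j ∈ Finset.Ico (i+1) m, (x j - 1) := by
    have := refl_sum (fun j => x j - 1) (i+1) m c2 (fun j hj1 hj2 => by
      have e : i + 1 + m - 1 - j = m + i - j := by omega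
      rw [e]; exact h2 j (by omega) hj2)
    have e : m - (i + 1) = m - 1 - i := by omega
    rwa [e] at this
  omega


/-- decomposability predicate -/
def Dec (m : ℕ) (x : ℕ → ℕ) (i : ℕ) : Prop :=
  ∃ j k, (1 ≤ j ∧ j < m) ∧ (1 ≤ k ∧ k < m) ∧
    ((j + k = i ∧ x j + x k ≤ x i) ∨ (j + k = m + i ∧ x j + x k + 1 ≤ x i))

section Class
variable (hadd : ∀ a ∈ S, ∀ b ∈ S, a + b ∈ S) (h0 : 0 ∈ S) (hmS : m ∈ S)
  (hx : ∀ i, 1 ≤ i → i ≤ m - 1 → x i * m + i ∈ S ∧ (x i - 1) * m + i ∉ S)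
  (hK : 2 * ∑ j ∈ Finset.Ico 1 m, (x j - 1) ≤ m)

include hadd h0 hmS hx

include hK in
lemma ns_no4 {i : ℕ} (hi1 : 1 ≤ i) (hi2 : i < m) : x i ≤ 3 := by
  by_contra h4
  push_neg at h4
  have h1 : ∀ j, 1 ≤ j → j < i → 2 ≤ (x j - 1) + (x (i - j) - 1) := by
    intro j hj1 hj2
    have hk := kunz1 hadd h0 hmS hx hj1 (by omega : 1 ≤ i - j) (by omega : j + (i - j) < m)
    rw [(by omega : j + (i - j) = i)] at hk
    have p1 := ns_xpos hadd h0 hmS hx hj1 (by omega)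
    have p2 := ns_xpos hadd h0 hmS hx (by omega : 1 ≤ i - j) (by omega)
    omega
  have h2 : ∀ j, i < j → j < m → 1 ≤ (x j - 1) + (x (m + i - j) - 1) := by
    intro j hj1 hj2
    have hk := kunz2 hadd h0 hmS hx (by omega : 1 ≤ j) hj2
      (by omega : 1 ≤ m + i - j) (by omega : m + i - j < m) hi1 hi2
      (by omega : j + (m + i - j) = m + i)
    have p1 := ns_xpos hadd h0 hmS hx (by omega : 1 ≤ j) hj2
    have p2 := ns_xpos hadd h0 hmS hx (by omega : 1 ≤ m + i - j) (by omega)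
    omega
  have := kcount hi1 hi2 2 1 h1 h2
  omega

include hK in
lemma ns_three_dec {i : ℕ} (hi1 : 1 ≤ i) (hi2 : i < m) (h3 : x i = 3) : Dec m x i := by
  by_contra hnd
  rw [Dec] at hnd
  push_neg at hnd
  have h1 : ∀ j, 1 ≤ j → j < i → 2 ≤ (x j - 1) + (x (i - j) - 1) := by
    intro j hj1 hj2
    have := hnd j (i - j) ⟨hj1, by omega⟩ ⟨by omega, by omega⟩
    have p1 := ns_xpos hadd h0 hmS hx hj1 (by omega)
    have p2 := ns_xpos hadd h0 hmS hx (by omega : 1 ≤ i - j) (by omega)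
    omega
  have h2 : ∀ j, i < j → j < m → 1 ≤ (x j - 1) + (x (m + i - j) - 1) := by
    intro j hj1 hj2
    have := hnd j (m + i - j) ⟨by omega, hj2⟩ ⟨by omega, by omega⟩
    have p1 := ns_xpos hadd h0 hmS hx (by omega : 1 ≤ j) hj2
    have p2 := ns_xpos hadd h0 hmS hx (by omega : 1 ≤ m + i - j) (by omega)
    omega
  have := kcount hi1 hi2 2 1 h1 h2
  omega

lemma ns_three_small {i : ℕ} (hi1 : 1 ≤ i) (hi2 : i < m) (h3 : x i = 3) :
    i + 3 ≤ 2 * ∑ j ∈ Finset.Ico 1 m, (x j - 1) := by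
  have h1 : ∀ j, 1 ≤ j → j < i → 1 ≤ (x j - 1) + (x (i - j) - 1) := by
    intro j hj1 hj2
    have hk := kunz1 hadd h0 hmS hx hj1 (by omega : 1 ≤ i - j) (by omega : j + (i - j) < m)
    rw [(by omega : j + (i - j) = i)] at hk
    have p1 := ns_xpos hadd h0 hmS hx hj1 (by omega)
    have p2 := ns_xpos hadd h0 hmS hx (by omega : 1 ≤ i - j) (by omega)
    omega
  have h2 : ∀ j, i < j → j < m → 0 ≤ (x j - 1) + (x (m + i - j) - 1) := fun _ _ _ => Nat.zero_le _
  have := kcount hi1 hi2 1 0 h1 h2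
  omega

lemma ns_two_notdec {i : ℕ} (hi1 : 1 ≤ i) (hi2 : i < m) (h2i : x i = 2) (hnd : ¬ Dec m x i) :
    i + 1 ≤ 2 * ∑ j ∈ Finset.Ico 1 m, (x j - 1) := by
  rw [Dec] at hnd
  push_neg at hnd
  have h1 : ∀ j, 1 ≤ j → j < i → 1 ≤ (x j - 1) + (x (i - j) - 1) := by
    intro j hj1 hj2
    have := hnd j (i - j) ⟨hj1, by omega⟩ ⟨by omega, by omega⟩
    have p1 := ns_xpos hadd h0 hmS hx hj1 (by omega)
    have p2 := ns_xpos hadd h0 hmS hx (by omega : 1 ≤ i - j) (by omega)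
    omega
  have h2 : ∀ j, i < j → j < m → 0 ≤ (x j - 1) + (x (m + i - j) - 1) := fun _ _ _ => Nat.zero_le _
  have := kcount hi1 hi2 1 0 h1 h2
  omega

lemma ns_one_notdec {i : ℕ} (h1i : x i = 1) : ¬ Dec m x i := by
  rintro ⟨j, k, ⟨hj1, hj2⟩, ⟨hk1, hk2⟩, h | h⟩ <;>
  · have p1 := ns_xpos hadd h0 hmS hx hj1 hj2
    have p2 := ns_xpos hadd h0 hmS hx hk1 hk2
    omega

lemma ns_two_dec_iff {i : ℕ} (h2i : x i = 2) :
    Dec m x i ↔ ∃ j k, (1 ≤ j ∧ j < m) ∧ (1 ≤ k ∧ k < m) ∧ j + k = i ∧ x j = 1 ∧ x k = 1 := by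
  constructor
  · rintro ⟨j, k, ⟨hj1, hj2⟩, ⟨hk1, hk2⟩, h | h⟩
    · have p1 := ns_xpos hadd h0 hmS hx hj1 hj2
      have p2 := ns_xpos hadd h0 hmS hx hk1 hk2
      exact ⟨j, k, ⟨hj1, hj2⟩, ⟨hk1, hk2⟩, h.1, by omega, by omega⟩
    · have p1 := ns_xpos hadd h0 hmS hx hj1 hj2
      have p2 := ns_xpos hadd h0 hmS hx hk1 hk2
      omega
  · rintro ⟨j, k, hj, hk, hjk, e1, e2⟩
    exact ⟨j, k, hj, hk, Or.inl ⟨hjk, by omega⟩⟩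

end Class

attribute [local instance] Classical.propDecidable

section TSet
variable (hadd : ∀ a ∈ S, ∀ b ∈ S, a + b ∈ S) (h0 : 0 ∈ S) (hmS : m ∈ S)
  (hx : ∀ i, 1 ≤ i → i ≤ m - 1 → x i * m + i ∈ S ∧ (x i - 1) * m + i ∉ S)
  (hm1 : 1 ≤ m) (hsmall : ∀ n, 0 < n → n < m → n ∉ S)

include hadd h0 hmS hx hm1 hsmall

lemma ns_T :
    (S \ {0}) \ {y | ∃ a ∈ S \ {0}, ∃ b ∈ S \ {0}, y = a + b} =
      ↑(insert m (((Finset.Ico 1 m).filter (fun i => ¬ Dec m x i)).image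
          (fun i => x i * m + i))) := by
  have hmem : ∀ r, 1 ≤ r → r < m → ∀ q : ℕ, (q * m + r ∈ S ↔ x r ≤ q) :=
    fun r h1 h2 => ns_mem_iff hadd h0 hmS hx h1 h2
  have hmul := ns_mul hadd h0 hmS
  have hgem : ∀ y ∈ S, y ≠ 0 → m ≤ y := by
    intro y hy hy0
    by_contra h
    exact hsmall y (Nat.pos_of_ne_zero hy0) (by omega) hy
  ext y
  simp only [Set.mem_diff, Set.mem_setOf_eq, Set.mem_singleton_iff, Finset.coe_insert,
    Set.mem_insert_iff, Finset.coe_image, Set.mem_image, Finset.mem_coe, Finset.mem_filter,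
    Finset.mem_Ico]
  constructor
  · rintro ⟨⟨hyS, hy0⟩, hns⟩
    have hym : m ≤ y := hgem y hyS hy0
    obtain ⟨q, r, hqr, hrm⟩ : ∃ q r, q * m + r = y ∧ r < m :=
      ⟨y / m, y % m, by have := Nat.div_add_mod' y m; omega, Nat.mod_lt _ (by omega)⟩
    rcases Nat.eq_zero_or_pos r with h | h
    · -- multiple of m
      left
      have hq0 : 1 ≤ q := by
        rcases Nat.eq_zero_or_pos q with h0' | h0'
        · subst h0'; rw [zero_mul] at hqr; omega
        · exact h0'
      rcases Nat.lt_or_ge y (2 * m) with h2 | h2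
      · have hq1 : q = 1 := by
          rcases Nat.lt_or_ge q 2 with h' | h'
          · omega
          · exfalso; have := Nat.mul_le_mul_right m h'; omega
        subst hq1; rw [one_mul] at hqr; omega
      · exfalso
        apply hns
        have hgm : 1 * m ≤ q * m := Nat.mul_le_mul_right m hq0
        rw [one_mul] at hgm
        have hB : (q - 1) * m = q * m - m := by
          rw [Nat.sub_mul, one_mul]
        exact ⟨m, ⟨hmS, by omega⟩, (q - 1) * m, ⟨hmul _, by omega⟩, by omega⟩
    · have hqx : x r ≤ q := (hmem r h hrm q).1 (hqr ▸ hyS)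
      have hxr1 : 1 ≤ x r := ns_xpos hadd h0 hmS hx h hrm
      rcases Nat.lt_or_ge (x r) q with hlt | hge
      · exfalso
        apply hns
        have hC : (q - x r) * m = q * m - x r * m := Nat.sub_mul q (x r) m
        have hD : (x r + 1) * m ≤ q * m := Nat.mul_le_mul_right m (by omega)
        have hE : (x r + 1) * m = x r * m + m := by ring
        refine ⟨x r * m + r, ⟨(hmem r h hrm (x r)).2 le_rfl, by positivity⟩,
          (q - x r) * m, ⟨hmul _, by omega⟩, by omega⟩
      · have hqeq : q = x r := by omega
        rw [hqeq] at hqr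
        right
        refine ⟨r, ⟨⟨h, hrm⟩, ?_⟩, by omega⟩
        rintro ⟨j, k, ⟨hj1, hj2⟩, ⟨hk1, hk2⟩, hcase⟩
        apply hns
        rcases hcase with ⟨hjk, hle⟩ | ⟨hjk, hle⟩
        · have hxj1 : 1 ≤ x j := ns_xpos hadd h0 hmS hx hj1 hj2
          have h1 : x j * m + (x r - x j) * m = x r * m := by
            rw [← add_mul]; congr 1; omega
          refine ⟨x j * m + j, ⟨(hmem j hj1 hj2 (x j)).2 le_rfl, by positivity⟩,
            (x r - x j) * m + k, ⟨(hmem k hk1 hk2 _).2 (by omega), by positivity⟩, by omega⟩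
        · have hxj1 : 1 ≤ x j := ns_xpos hadd h0 hmS hx hj1 hj2
          have h1 : x j * m + (x r - x j - 1) * m = (x r - 1) * m := by
            rw [← add_mul]; congr 1; omega
          have h2 : (x r - 1) * m = x r * m - m := by rw [Nat.sub_mul, one_mul]
          have h3 : 1 * m ≤ x r * m := Nat.mul_le_mul_right m hxr1
          rw [one_mul] at h3
          refine ⟨x j * m + j, ⟨(hmem j hj1 hj2 (x j)).2 le_rfl, by positivity⟩,
            (x r - x j - 1) * m + k, ⟨(hmem k hk1 hk2 _).2 (by omega), by positivity⟩, by omega⟩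
  · intro hy
    rcases hy with rfl | ⟨i, ⟨⟨hi1, hi2⟩, hnd⟩, rfl⟩
    · refine ⟨⟨hmS, by omega⟩, ?_⟩
      rintro ⟨a, ⟨haS, ha0⟩, b, ⟨hbS, hb0⟩, he⟩
      have := hgem a haS ha0
      have := hgem b hbS hb0
      omega
    · have hxi : 1 ≤ x i := ns_xpos hadd h0 hmS hx hi1 hi2
      refine ⟨⟨(hmem i hi1 hi2 (x i)).2 le_rfl, by positivity⟩, ?_⟩
      rintro ⟨a, ⟨haS, ha0⟩, b, ⟨hbS, hb0⟩, he⟩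
      have ham : m ≤ a := hgem a haS ha0
      have hbm : m ≤ b := hgem b hbS hb0
      obtain ⟨qa, ja, hqra, hjam⟩ : ∃ qa ja, qa * m + ja = a ∧ ja < m :=
        ⟨a / m, a % m, by have := Nat.div_add_mod' a m; omega, Nat.mod_lt _ (by omega)⟩
      obtain ⟨qb, jb, hqrb, hjbm⟩ : ∃ qb jb, qb * m + jb = b ∧ jb < m :=
        ⟨b / m, b % m, by have := Nat.div_add_mod' b m; omega, Nat.mod_lt _ (by omega)⟩
      -- rule out multiples of m
      rcases Nat.eq_zero_or_pos ja with hz | hz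
      · have hqa1 : 1 ≤ qa := by
          rcases Nat.eq_zero_or_pos qa with h' | h' 
          · subst h'; rw [zero_mul] at hqra; omega
          · exact h'
        have hble : qa * m + b = x i * m + i := by omega
        have hlem' : qa * m ≤ x i * m := by omega
        have hle : qa ≤ x i := Nat.le_of_mul_le_mul_right hlem' (by omega)
        have hsub : (x i - qa) * m = x i * m - qa * m := Nat.sub_mul _ _ m
        have hb' : b = (x i - qa) * m + i := by omega
        have := (hmem i hi1 hi2 (x i - qa)).1 (hb' ▸ hbS)
        omega
      rcases Nat.eq_zero_or_pos jb with hz' | hz'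
      · have hqb1 : 1 ≤ qb := by
          rcases Nat.eq_zero_or_pos qb with h' | h' 
          · subst h'; rw [zero_mul] at hqrb; omega
          · exact h'
        have hble : qb * m + a = x i * m + i := by omega
        have hlem' : qb * m ≤ x i * m := by omega
        have hle : qb ≤ x i := Nat.le_of_mul_le_mul_right hlem' (by omega)
        have hsub : (x i - qb) * m = x i * m - qb * m := Nat.sub_mul _ _ m
        have ha' : a = (x i - qb) * m + i := by omega
        have := (hmem i hi1 hi2 (x i - qb)).1 (ha' ▸ haS)
        omega
      -- both nonzero residues
      have hxa : x ja ≤ qa := (hmem ja hz hjam qa).1 (hqra ▸ haS)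
      have hxb : x jb ≤ qb := (hmem jb hz' hjbm qb).1 (hqrb ▸ hbS)
      have heq : qa * m + ja + (qb * m + jb) = x i * m + i := by omega
      have heqz : ((qa : ℤ) * m + ja) + ((qb : ℤ) * m + jb) = (x i : ℤ) * m + i := by
        exact_mod_cast heq
      have hd : ((ja : ℤ) + jb) - i = ((x i : ℤ) - qa - qb) * m := by linear_combination heqz
      have cja : (1:ℤ) ≤ (ja:ℤ) := by exact_mod_cast hz
      have cjb : (1:ℤ) ≤ (jb:ℤ) := by exact_mod_cast hz'
      have cjam : (ja:ℤ) < m := by exact_mod_cast hjam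
      have cjbm : (jb:ℤ) < m := by exact_mod_cast hjbm
      have ci1 : (1:ℤ) ≤ (i:ℤ) := by exact_mod_cast hi1
      have ci2 : (i:ℤ) < m := by exact_mod_cast hi2
      have cm1 : (1:ℤ) ≤ (m:ℤ) := by exact_mod_cast hm1
      have hE0 : (0:ℤ) ≤ (x i : ℤ) - qa - qb := by
        by_contra hneg
        push_neg at hneg
        have h5 : ((x i : ℤ) - qa - qb) * m ≤ (-1) * m :=
          mul_le_mul_of_nonneg_right (by omega) (by linarith)
        linarith
      have hE1 : (x i : ℤ) - qa - qb ≤ 1 := by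
        by_contra hbig
        push_neg at hbig
        have h5 : (2:ℤ) * m ≤ ((x i : ℤ) - qa - qb) * m :=
          mul_le_mul_of_nonneg_right (by omega) (by linarith)
        linarith
      apply hnd
      have hcases : ((x i:ℤ) - qa - qb) = 0 ∨ ((x i:ℤ) - qa - qb) = 1 := by omega
      rcases hcases with hc | hc
      · rw [hc, zero_mul] at hd
        have hjk : ja + jb = i := by exact_mod_cast (by linarith : ((ja:ℤ)+jb) = i)
        have hq' : qa + qb = x i := by exact_mod_cast (by linarith : ((qa:ℤ)+qb) = (x i : ℤ))
        exact ⟨ja, jb, ⟨hz, hjam⟩, ⟨hz', hjbm⟩, Or.inl ⟨hjk, by omega⟩⟩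
      · rw [hc, one_mul] at hd
        have hjk : ja + jb = m + i := by
          exact_mod_cast (by linarith : ((ja:ℤ)+jb) = (m:ℤ) + i)
        have hq' : qa + qb + 1 = x i := by
          exact_mod_cast (by linarith : ((qa:ℤ)+qb+1) = (x i : ℤ))
        exact ⟨ja, jb, ⟨hz, hjam⟩, ⟨hz', hjbm⟩, Or.inr ⟨hjk, by omega⟩⟩

end TSet

theorem stmt_18 (S : Set ℕ) (h0 : 0 ∈ S) (hadd : ∀ a ∈ S, ∀ b ∈ S, a + b ∈ S)
    (hfin : Sᶜ.Finite) (m g : ℕ) (k₁ : ℤ) (hk₁ : -1 ≤ k₁)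
    (hm : sInf (S \ {0}) = m) (hg : Sᶜ.ncard = g)
    (hmg : (m : ℤ) = (g : ℤ) - k₁) (hgk : 3 * k₁ + 2 ≤ (g : ℤ))
    (x : ℕ → ℕ)
    (hx : ∀ i, 1 ≤ i → i ≤ m - 1 → x i * m + i ∈ S ∧ (x i - 1) * m + i ∉ S) :
    (((S \ {0}) \ {y | ∃ a ∈ S \ {0}, ∃ b ∈ S \ {0}, y = a + b}).ncard : ℤ)
      = (g : ℤ) - 2 * k₁ - 1
        + ({i : ℕ | 1 ≤ i ∧ (i : ℤ) ≤ 2 * k₁ + 1 ∧ x i = 2}.ncard : ℤ)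
        + ({i : ℕ | 1 ≤ i ∧ (i : ℤ) ≤ 2 * k₁ + 1 ∧ x i = 3}.ncard : ℤ)
        - ({i : ℕ | 1 ≤ i ∧ (i : ℤ) ≤ 2 * k₁ + 1 ∧
            ∃ j₁ j₂ : ℕ, (1 ≤ j₁ ∧ (j₁ : ℤ) ≤ 2 * k₁ + 1) ∧
              (1 ≤ j₂ ∧ (j₂ : ℤ) ≤ 2 * k₁ + 1) ∧ j₁ + j₂ = i ∧
              x j₁ = 1 ∧ x j₂ = 1 ∧ x i = 2}.ncard : ℤ) := by
  classical
  -- basic setup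
  have hSinf : S.Infinite := Set.infinite_of_finite_compl hfin
  have hne : (S \ {0}).Nonempty := ((hSinf.diff (Set.finite_singleton 0))).nonempty
  have hmem0 := Nat.sInf_mem hne
  rw [hm] at hmem0
  obtain ⟨hmS, hm0⟩ := hmem0
  simp only [Set.mem_singleton_iff] at hm0
  have hm1 : 1 ≤ m := Nat.pos_of_ne_zero hm0
  have hsmall : ∀ n, 0 < n → n < m → n ∉ S := by
    intro n hn1 hn2 hnS
    have h' : sInf (S \ {0}) ≤ n := Nat.sInf_le ⟨hnS, by simp only [Set.mem_singleton_iff]; omega⟩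
    rw [hm] at h'
    omega
  have hmem : ∀ r, 1 ≤ r → r < m → ∀ q : ℕ, (q * m + r ∈ S ↔ x r ≤ q) :=
    fun r h1 h2 => ns_mem_iff hadd h0 hmS hx h1 h2
  have hmul := ns_mul hadd h0 hmS
  have hxpos : ∀ i, 1 ≤ i → i < m → 1 ≤ x i := fun i h1 h2 => ns_xpos hadd h0 hmS hx h1 h2
  -- genus
  have hg' : ∑ i ∈ Finset.Ico 1 m, x i = g := by
    rw [← hg, ns_genus hmul hmem hm1]
  set Ksum := ∑ j ∈ Finset.Ico 1 m, (x j - 1) with hKsum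
  have hKg : Ksum + (m - 1) = g := by
    have h1 : ∑ j ∈ Finset.Ico 1 m, ((x j - 1) + 1) = ∑ j ∈ Finset.Ico 1 m, x j :=
      Finset.sum_congr rfl (fun j hj => by
        simp only [Finset.mem_Ico] at hj
        have := hxpos j hj.1 hj.2; omega)
    rw [Finset.sum_add_distrib, Finset.sum_const, Nat.card_Ico, smul_eq_mul, mul_one, hg'] at h1
    omega
  have hKk : (Ksum : ℤ) = k₁ + 1 := by
    have h1 : (Ksum : ℤ) + ((m : ℤ) - 1) = g := by
      have := hKg
      push_cast [← this, Nat.cast_sub hm1]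
      ring
    omega
  have hK2 : 2 * Ksum ≤ m := by omega
  set L : ℕ := (2 * k₁ + 1).toNat with hL
  -- finsets
  set H2 : Finset ℕ := (Finset.Ico 1 m).filter (fun i => x i = 2) with hH2
  set H3 : Finset ℕ := (Finset.Ico 1 m).filter (fun i => x i = 3) with hH3
  set A : Finset ℕ := H2.filter (fun i => i ≤ L) with hA
  set Pp : ℕ → Prop := fun i => ∃ j k, (1 ≤ j ∧ j < m) ∧ (1 ≤ k ∧ k < m) ∧
      j + k = i ∧ x j = 1 ∧ x k = 1 with hPp
  set C : Finset ℕ := A.filter Pp with hC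
  set D : Finset ℕ := (Finset.Ico 1 m).filter (Dec m x) with hD
  -- the three sets of the statement
  have hAset : {i : ℕ | 1 ≤ i ∧ (i : ℤ) ≤ 2 * k₁ + 1 ∧ x i = 2} = ↑A := by
    ext i
    simp only [Set.mem_setOf_eq, hA, hH2, Finset.coe_filter, Finset.mem_filter,
      Finset.mem_Ico, Set.mem_setOf_eq]
    constructor
    · rintro ⟨h1, h2, h3⟩
      exact ⟨⟨⟨h1, by omega⟩, h3⟩, by omega⟩
    · rintro ⟨⟨⟨h1, h1'⟩, h3⟩, h2⟩
      exact ⟨h1, by omega, h3⟩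
  have hBset : {i : ℕ | 1 ≤ i ∧ (i : ℤ) ≤ 2 * k₁ + 1 ∧ x i = 3} = ↑H3 := by
    ext i
    simp only [Set.mem_setOf_eq, hH3, Finset.coe_filter, Finset.mem_Ico, Set.mem_setOf_eq]
    constructor
    · rintro ⟨h1, h2, h3⟩
      exact ⟨⟨h1, by omega⟩, h3⟩
    · rintro ⟨⟨h1, h1'⟩, h3⟩
      have := ns_three_small hadd h0 hmS hx h1 h1' h3
      exact ⟨h1, by omega, h3⟩
  have hCset : {i : ℕ | 1 ≤ i ∧ (i : ℤ) ≤ 2 * k₁ + 1 ∧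
      ∃ j₁ j₂ : ℕ, (1 ≤ j₁ ∧ (j₁ : ℤ) ≤ 2 * k₁ + 1) ∧
        (1 ≤ j₂ ∧ (j₂ : ℤ) ≤ 2 * k₁ + 1) ∧ j₁ + j₂ = i ∧
        x j₁ = 1 ∧ x j₂ = 1 ∧ x i = 2} = ↑C := by
    ext i
    simp only [Set.mem_setOf_eq, hC, hA, hH2, hPp, Finset.coe_filter, Finset.mem_filter,
      Finset.mem_Ico, Set.mem_setOf_eq]
    constructor
    · rintro ⟨h1, h2, j₁, j₂, ⟨hj1, hj1'⟩, ⟨hj2, hj2'⟩, hsum, e1, e2, e3⟩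
      exact ⟨⟨⟨⟨h1, by omega⟩, e3⟩, by omega⟩,
        j₁, j₂, ⟨hj1, by omega⟩, ⟨hj2, by omega⟩, hsum, e1, e2⟩
    · rintro ⟨⟨⟨⟨h1, h1'⟩, e3⟩, h2⟩, j₁, j₂, ⟨hj1, hj1'⟩, ⟨hj2, hj2'⟩, hsum, e1, e2⟩
      exact ⟨h1, by omega, j₁, j₂, ⟨hj1, by omega⟩, ⟨hj2, by omega⟩, hsum, e1, e2, e3⟩
  -- the generator set
  have hT := ns_T hadd h0 hmS hx hm1 hsmall
  rw [hT, hAset, hBset, hCset, Set.ncard_coe_finset, Set.ncard_coe_finset,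
    Set.ncard_coe_finset, Set.ncard_coe_finset]
  -- card of generator set
  have hmnot : m ∉ ((Finset.Ico 1 m).filter (fun i => ¬ Dec m x i)).image
      (fun i => x i * m + i) := by
    simp only [Finset.mem_image, Finset.mem_filter, Finset.mem_Ico, not_exists]
    rintro i ⟨⟨⟨hi1, hi2⟩, _⟩⟩
    have hx1 := hxpos i hi1 hi2
    have : 1 * m ≤ x i * m := Nat.mul_le_mul_right m hx1
    omega
  have hinj : Set.InjOn (fun i => x i * m + i)
      ↑((Finset.Ico 1 m).filter (fun i => ¬ Dec m x i)) := by
    intro i hi j hj he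
    simp only [Finset.coe_filter, Set.mem_setOf_eq, Finset.mem_Ico] at hi hj
    have h1 : (x i * m + i) % m = i := by
      simp [Nat.add_mod, Nat.mul_mod_left, Nat.mod_eq_of_lt hi.1.2]
    have h2 : (x j * m + j) % m = j := by
      simp [Nat.add_mod, Nat.mul_mod_left, Nat.mod_eq_of_lt hj.1.2]
    simp only at he
    rw [← h1, he, h2]
  rw [Finset.card_insert_of_notMem hmnot, Finset.card_image_of_injOn hinj]
  -- counting
  have hDcompl : D.card + ((Finset.Ico 1 m).filter (fun i => ¬ Dec m x i)).card = m - 1 := by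
    rw [hD, Finset.card_filter_add_card_filter_not, Nat.card_Ico]
  -- K as a sum over values
  have hKval : Ksum = H2.card + 2 * H3.card := by
    rw [hKsum, ← Finset.sum_filter_add_sum_filter_not (Finset.Ico 1 m) (fun i => x i = 2)]
    have e1 : ∑ j ∈ (Finset.Ico 1 m).filter (fun i => x i = 2), (x j - 1) = H2.card := by
      rw [hH2, Finset.card_eq_sum_ones]
      exact Finset.sum_congr rfl (fun j hj => by
        simp only [Finset.mem_filter] at hj; omega)
    have e2 : ∑ j ∈ (Finset.Ico 1 m).filter (fun i => ¬ x i = 2), (x j - 1)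
        = 2 * H3.card := by
      rw [← Finset.sum_filter_add_sum_filter_not
        ((Finset.Ico 1 m).filter (fun i => ¬ x i = 2)) (fun i => x i = 3)]
      have e3 : ((Finset.Ico 1 m).filter (fun i => ¬ x i = 2)).filter (fun i => x i = 3)
          = H3 := by
        rw [Finset.filter_filter, hH3]
        exact Finset.filter_congr (fun i _ => by constructor <;> (intro h; omega))
      have e4 : ∑ j ∈ ((Finset.Ico 1 m).filter (fun i => ¬ x i = 2)).filter
          (fun i => ¬ x i = 3), (x j - 1) = 0 := by
        apply Finset.sum_eq_zero
        intro j hj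
        simp only [Finset.mem_filter, Finset.mem_Ico] at hj
        have := hxpos j hj.1.1.1 hj.1.1.2
        have := ns_no4 hadd h0 hmS hx hK2 hj.1.1.1 hj.1.1.2
        omega
      rw [e3, e4]
      have e5 : ∑ j ∈ H3, (x j - 1) = 2 * H3.card := by
        rw [Finset.card_eq_sum_ones, Finset.mul_sum]
        exact Finset.sum_congr rfl (fun j hj => by
          rw [hH3] at hj
          simp only [Finset.mem_filter] at hj; omega)
      omega
    omega
  -- D described
  have hDeq : D = (H2.filter Pp) ∪ H3 := by
    ext i
    simp only [hD, hH2, hH3, Finset.mem_union, Finset.mem_filter, Finset.mem_Ico]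
    constructor
    · rintro ⟨⟨hi1, hi2⟩, hdec⟩
      have h4 := ns_no4 hadd h0 hmS hx hK2 hi1 hi2
      have h1 := hxpos i hi1 hi2
      rcases (by omega : x i = 1 ∨ x i = 2 ∨ x i = 3) with hv | hv | hv
      · exact absurd hdec (ns_one_notdec hadd h0 hmS hx hv)
      · exact Or.inl ⟨⟨⟨hi1, hi2⟩, hv⟩, (ns_two_dec_iff hadd h0 hmS hx hv).1 hdec⟩
      · exact Or.inr ⟨⟨hi1, hi2⟩, hv⟩
    · rintro (⟨⟨⟨hi1, hi2⟩, hv⟩, hp⟩ | ⟨⟨hi1, hi2⟩, hv⟩)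
      · exact ⟨⟨hi1, hi2⟩, (ns_two_dec_iff hadd h0 hmS hx hv).2 hp⟩
      · exact ⟨⟨hi1, hi2⟩, ns_three_dec hadd h0 hmS hx hK2 hi1 hi2 hv⟩
  have hdisj : Disjoint (H2.filter Pp) H3 := by
    rw [Finset.disjoint_left]
    intro i hi hi'
    rw [hH3] at hi'
    rw [hH2] at hi
    simp only [Finset.mem_filter] at hi hi'
    omega
  have hDcard : D.card = (H2.filter Pp).card + H3.card := by
    rw [hDeq, Finset.card_union_of_disjoint hdisj]
  -- large 2s are decomposable
  have hnotP : H2.filter (fun i => ¬ Pp i) = A.filter (fun i => ¬ Pp i) := by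
    ext i
    simp only [hA, Finset.mem_filter]
    constructor
    · rintro ⟨hi, hp⟩
      refine ⟨⟨hi, ?_⟩, hp⟩
      rw [hH2] at hi
      simp only [Finset.mem_filter, Finset.mem_Ico] at hi
      have hnd : ¬ Dec m x i := by
        intro hdec
        exact hp ((ns_two_dec_iff hadd h0 hmS hx hi.2).1 hdec)
      have := ns_two_notdec hadd h0 hmS hx hi.1.1 hi.1.2 hi.2 hnd
      omega
    · rintro ⟨⟨hi, _⟩, hp⟩
      exact ⟨hi, hp⟩
  have hsplit2 : (H2.filter Pp).card + (A.filter (fun i => ¬ Pp i)).card = H2.card := by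
    rw [← hnotP, Finset.card_filter_add_card_filter_not]
  have hsplitA : C.card + (A.filter (fun i => ¬ Pp i)).card = A.card := by
    rw [hC, Finset.card_filter_add_card_filter_not]
  have hAle : A.card ≤ H2.card := Finset.card_le_card (Finset.filter_subset _ _)
  -- final arithmetic
  push_cast
  omega

end NS
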